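/- Tracking with forced exploration: Let K ≥ 1 and let (w̃(t))_{t≥1} be vectors in Σ_K with w̃(t) = π for 1 ≤ t ≤ K. Set γ_t = 1/(4√t), define w'(t) = π for 1 ≤ t ≤ K and w'(t+1) = (1 − γ_t)·w̃(t+1) + γ_t·π for t ≥ K, and let (A_t)_{t≥1} follow the tracking rule: A_s = s for 1 ≤ s ≤ K and, for t ≥ K, A_{t+1} is any element of argmax_{a∈{1,…,K}} ( Σ_{s=1}^{t+1} w'_a(s) − N_a(t) ), where N_a(t) = #{1 ≤ s ≤ t : A_s = a}. Then for every t ≥ 1: max_a |Σ_{s=1}^t w̃_a(s) − N_a(t)| ≤ 2K√t, and N_a(t) ≥ √t/(4K) − 2K for every a ∈ {1,…,K}. -/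

import Mathlib

/-- Number of draws of arm `a` up to and including time `t`. -/
def Ncount {K : ℕ} (A : ℕ → Fin K) (a : Fin K) (t : ℕ) : ℕ :=
  ((Finset.Icc 1 t).filter fun s => A s = a).card

lemma Icc_succ_right' (t : ℕ) : Finset.Icc 1 (t + 1) = insert (t + 1) (Finset.Icc 1 t) := by
  ext x; simp; omega

lemma Ncount_succ {K : ℕ} (A : ℕ → Fin K) (a : Fin K) (t : ℕ) :
    (Ncount A a (t + 1) : ℝ) = Ncount A a t + if A (t + 1) = a then 1 else 0 := by
  unfold Ncount
  rw [Icc_succ_right', Finset.filter_insert]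
  split
  · rw [Finset.card_insert_of_notMem (by simp)]; push_cast; ring
  · simp

lemma Ncount_sum {K : ℕ} (A : ℕ → Fin K) (t : ℕ) :
    ∑ a : Fin K, Ncount A a t = t := by
  unfold Ncount
  rw [← Finset.card_eq_sum_card_fiberwise (fun x (_ : x ∈ Finset.Icc 1 t) => Finset.mem_univ (A x))]
  simp

lemma Ncount_base {K : ℕ} (A : ℕ → Fin K)
    (hA0 : ∀ s, 1 ≤ s → s ≤ K → (A s : ℕ) = s - 1) (t : ℕ) (ht : t ≤ K) (a : Fin K) :
    Ncount A a t = if (a : ℕ) < t then 1 else 0 := by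
  unfold Ncount
  have hfe : ((Finset.Icc 1 t).filter fun s => A s = a)
      = (Finset.Icc 1 t).filter fun s => s = (a : ℕ) + 1 := by
    apply Finset.filter_congr
    intro s hs
    simp only [Finset.mem_Icc] at hs
    have hAs := hA0 s hs.1 (hs.2.trans ht)
    constructor
    · intro h; rw [h] at hAs; omega
    · intro h
      subst h
      have h2 : ((a:ℕ) + 1 - 1) = (a : ℕ) := by omega
      rw [h2] at hAs
      exact Fin.ext hAs
  rw [hfe, Finset.filter_eq']
  split
  · next hmem =>
    simp only [Finset.mem_Icc] at hmem
    rw [if_pos (by omega), Finset.card_singleton]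
  · next hmem =>
    simp only [Finset.mem_Icc, not_and, not_le] at hmem
    rw [if_neg (by omega), Finset.card_empty]

lemma sqrt_aux1 (x : ℝ) (hx : 0 ≤ x) :
    Real.sqrt x + 1 / (2 * Real.sqrt (x + 1)) ≤ Real.sqrt (x + 1) := by
  set a := Real.sqrt x with ha
  set b := Real.sqrt (x + 1) with hb
  have hb0 : 0 < b := Real.sqrt_pos.mpr (by linarith)
  have ha0 : 0 ≤ a := Real.sqrt_nonneg x
  have ha2 : a ^ 2 = x := Real.sq_sqrt hx
  have hb2 : b ^ 2 = x + 1 := Real.sq_sqrt (by linarith)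
  have h2 : 2 * a * b ≤ a ^ 2 + b ^ 2 := two_mul_le_add_sq a b
  have key : 1 / (2 * b) ≤ b - a := by
    rw [div_le_iff₀ (by positivity)]
    nlinarith
  linarith

lemma sqrt_aux2 (x : ℝ) (hx : 1 ≤ x) :
    Real.sqrt (x + 1) ≤ Real.sqrt x + 1 / (2 * Real.sqrt x) := by
  set a := Real.sqrt x with ha
  set b := Real.sqrt (x + 1) with hb
  have ha0 : 0 < a := Real.sqrt_pos.mpr (by linarith)
  have hb0 : 0 ≤ b := Real.sqrt_nonneg _
  have ha2 : a ^ 2 = x := Real.sq_sqrt (by linarith)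
  have hb2 : b ^ 2 = x + 1 := Real.sq_sqrt (by linarith)
  have h2 : 2 * a * b ≤ a ^ 2 + b ^ 2 := two_mul_le_add_sq a b
  have key : b - a ≤ 1 / (2 * a) := by
    rw [le_div_iff₀ (by positivity)]
    nlinarith
  linarith

lemma sum_inv_sqrt_le (n : ℕ) :
    ∑ u ∈ Finset.Icc 1 n, 1 / Real.sqrt u ≤ 2 * Real.sqrt n := by
  induction n with
  | zero => simp
  | succ n ih =>
    rw [Icc_succ_right', Finset.sum_insert (by simp)]
    have h1 := sqrt_aux1 (n : ℝ) (Nat.cast_nonneg n)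
    have h2 : 0 < Real.sqrt ((n : ℝ) + 1) := Real.sqrt_pos.mpr (by positivity)
    have h3 : 1 / Real.sqrt ((n:ℝ) + 1) = 2 * (1 / (2 * Real.sqrt ((n:ℝ)+1))) := by
      field_simp
    push_cast
    linarith

lemma sum_inv_sqrt_ge (m n : ℕ) :
    2 * (Real.sqrt (n + 1) - Real.sqrt (m + 1)) ≤ ∑ u ∈ Finset.Ioc m n, 1 / Real.sqrt u := by
  induction n with
  | zero =>
    have hm0 : (0:ℝ) ≤ (m:ℝ) := Nat.cast_nonneg m
    have h1 : (1:ℝ) ≤ Real.sqrt ((m:ℝ) + 1) := Real.one_le_sqrt.mpr (by linarith)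
    have h2 : Real.sqrt ((0:ℝ) + 1) = 1 := by norm_num
    have he : Finset.Ioc m 0 = ∅ := by ext x; simp
    rw [he, Finset.sum_empty]
    push_cast
    linarith
  | succ n ih =>
    rcases le_or_gt (n + 1) m with h | h
    · have he : Finset.Ioc m (n + 1) = ∅ := by
        ext x; simp; omega
      rw [he, Finset.sum_empty]
      have hmono : Real.sqrt ((n:ℝ) + 1 + 1) ≤ Real.sqrt ((m:ℝ) + 1) := by
        apply Real.sqrt_le_sqrt
        have hcast : (n:ℝ) + 1 ≤ (m:ℝ) := by exact_mod_cast h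
        linarith
      push_cast
      linarith
    · have hins : Finset.Ioc m (n + 1) = insert (n + 1) (Finset.Ioc m n) := by
        ext x; simp; omega
      rw [hins, Finset.sum_insert (by simp)]
      have hn1 : (1:ℝ) ≤ (n:ℝ) + 1 := by
        have h0 : (0:ℝ) ≤ n := Nat.cast_nonneg n; linarith
      have h2 := sqrt_aux2 ((n : ℝ) + 1) hn1
      have hpos : 0 < Real.sqrt ((n:ℝ) + 1) := Real.sqrt_pos.mpr (by positivity)
      have hh : 2 * (1 / (2 * Real.sqrt ((n:ℝ) + 1))) = 1 / Real.sqrt ((n:ℝ)+1) := by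
        field_simp
      push_cast
      linarith

set_option maxHeartbeats 1000000 in
/-- tracking with forced exploration. -/
theorem stmt5 (K : ℕ) (hK : 1 ≤ K)
    (wt : ℕ → Fin K → ℝ) (hwt : ∀ t, 1 ≤ t → wt t ∈ stdSimplex ℝ (Fin K))
    (hwtinit : ∀ t, 1 ≤ t → t ≤ K → wt t = fun _ => (1 : ℝ) / K)
    (w' : ℕ → Fin K → ℝ)
    (hw'init : ∀ t, 1 ≤ t → t ≤ K → w' t = fun _ => (1 : ℝ) / K)
    (hw'rec : ∀ t, K ≤ t → w' (t + 1) = fun a =>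
      (1 - 1 / (4 * Real.sqrt t)) * wt (t + 1) a + (1 / (4 * Real.sqrt t)) * ((1 : ℝ) / K))
    (A : ℕ → Fin K)
    (hA0 : ∀ s, 1 ≤ s → s ≤ K → (A s : ℕ) = s - 1)
    (htrack : ∀ t, K ≤ t → ∀ b : Fin K,
      (∑ s ∈ Finset.Icc 1 (t + 1), w' s b) - (Ncount A b t : ℝ) ≤
        (∑ s ∈ Finset.Icc 1 (t + 1), w' s (A (t + 1))) - (Ncount A (A (t + 1)) t : ℝ)) :
    ∀ t, 1 ≤ t →
      (∀ a : Fin K, |(∑ s ∈ Finset.Icc 1 t, wt s a) - (Ncount A a t : ℝ)| ≤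
          2 * K * Real.sqrt t) ∧
      ∀ a : Fin K, Real.sqrt t / (4 * K) - 2 * K ≤ (Ncount A a t : ℝ) := by
  have hK0 : (0:ℝ) < K := by exact_mod_cast hK
  have hKr : (1:ℝ) ≤ K := by exact_mod_cast hK
  have h1K : 0 < 1/(K:ℝ) := by positivity
  -- pointwise forms
  have hw'i : ∀ s, 1 ≤ s → s ≤ K → ∀ a, w' s a = 1/(K:ℝ) := by
    intro s h1 h2 a; exact congrFun (hw'init s h1 h2) a
  have hwti : ∀ s, 1 ≤ s → s ≤ K → ∀ a, wt s a = 1/(K:ℝ) := by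
    intro s h1 h2 a; exact congrFun (hwtinit s h1 h2) a
  have hw'r : ∀ u, K ≤ u → ∀ a, w' (u+1) a =
      (1 - 1 / (4 * Real.sqrt u)) * wt (u + 1) a + (1 / (4 * Real.sqrt u)) * ((1 : ℝ) / K) := by
    intro u hu a; exact congrFun (hw'rec u hu) a
  -- properties of w'
  have hw'props : ∀ s, 1 ≤ s → (∀ a, 0 ≤ w' s a) ∧ (∑ a, w' s a = 1) := by
    intro s hs
    rcases le_or_gt s K with h | h
    · constructor
      · intro a; rw [hw'i s hs h a]; positivity
      · rw [Finset.sum_congr rfl (fun a _ => hw'i s hs h a), Finset.sum_const,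
          Finset.card_univ, Fintype.card_fin, nsmul_eq_mul]
        field_simp
    · obtain ⟨u, rfl⟩ : ∃ u, s = u + 1 := ⟨s - 1, by omega⟩
      have hu : K ≤ u := by omega
      have hu1 : (1:ℝ) ≤ Real.sqrt u := Real.one_le_sqrt.mpr (by exact_mod_cast hK.trans hu)
      have hγ1 : 1/(4 * Real.sqrt u) ≤ 1/4 := by
        apply one_div_le_one_div_of_le (by norm_num)
        linarith
      have hγ0 : 0 < 1/(4 * Real.sqrt u) := by positivity
      obtain ⟨hpos, hsum⟩ := hwt (u+1) (by omega)
      constructor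
      · intro a
        rw [hw'r u hu a]
        have hp := hpos a
        have hgam : (0:ℝ) ≤ 1 - 1/(4*Real.sqrt u) := by linarith
        have h2 : (0:ℝ) ≤ 1/(4*Real.sqrt u) * (1/(K:ℝ)) := by positivity
        nlinarith [mul_nonneg hgam hp]
      · rw [Finset.sum_congr rfl (fun a _ => hw'r u hu a), Finset.sum_add_distrib,
          ← Finset.mul_sum, hsum, Finset.sum_const, Finset.card_univ, Fintype.card_fin,
          nsmul_eq_mul]
        field_simp
        ring
  have hW'sum : ∀ t : ℕ, (∑ a : Fin K, ∑ s ∈ Finset.Icc 1 t, w' s a) = t := by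
    intro t
    rw [Finset.sum_comm]
    rw [Finset.sum_congr rfl (fun s hs => (hw'props s (Finset.mem_Icc.mp hs).1).2)]
    simp
  have hNr : ∀ t : ℕ, (∑ a : Fin K, (Ncount A a t : ℝ)) = t := by
    intro t
    rw [← Nat.cast_sum]
    exact_mod_cast congrArg (Nat.cast : ℕ → ℝ) (Ncount_sum A t)
  -- lower bound on the deviation, by induction
  have hD : ∀ t, 1 ≤ t → ∀ a : Fin K,
      1/(K:ℝ) - 1 ≤ (∑ s ∈ Finset.Icc 1 t, w' s a) - Ncount A a t := by
    intro t ht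
    induction t, ht using Nat.le_induction with
    | base =>
      intro a
      rw [show Finset.Icc 1 1 = {1} from rfl, Finset.sum_singleton, hw'i 1 le_rfl hK a,
        Ncount_base A hA0 1 hK a]
      split_ifs <;> push_cast <;> linarith
    | succ n hn ih =>
      rcases lt_or_ge n K with h | h
      · intro a
        have hform : ∀ s ∈ Finset.Icc 1 (n+1), w' s a = 1/(K:ℝ) := by
          intro s hs; simp only [Finset.mem_Icc] at hs
          exact hw'i s hs.1 (by omega) a
        rw [Finset.sum_congr rfl hform, Finset.sum_const, Nat.card_Icc,
          Ncount_base A hA0 (n+1) (by omega) a, nsmul_eq_mul]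
        have hn0 : (0:ℝ) ≤ n := Nat.cast_nonneg n
        split_ifs <;> push_cast <;> nlinarith [mul_nonneg hn0 (le_of_lt h1K)]
      · have havg : (1:ℝ)/K ≤ (∑ s ∈ Finset.Icc 1 (n+1), w' s (A (n+1)))
            - Ncount A (A (n+1)) n := by
          have hsum1 : ∑ b : Fin K,
              ((∑ s ∈ Finset.Icc 1 (n+1), w' s b) - (Ncount A b n : ℝ)) = 1 := by
            rw [Finset.sum_sub_distrib, hW'sum (n+1), hNr n]; push_cast; ring
          have hle := Finset.sum_le_sum (fun b (_ : b ∈ Finset.univ) => htrack n h b)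
          rw [hsum1, Finset.sum_const, Finset.card_univ, Fintype.card_fin, nsmul_eq_mul] at hle
          rw [div_le_iff₀ hK0]
          nlinarith [hle]
        intro a
        rw [Ncount_succ]
        have hIcc : ∑ s ∈ Finset.Icc 1 (n+1), w' s a
            = (∑ s ∈ Finset.Icc 1 n, w' s a) + w' (n+1) a := by
          rw [Icc_succ_right', Finset.sum_insert (by simp)]; ring
        by_cases hac : A (n + 1) = a
        · rw [if_pos hac, ← hac]
          linarith [havg]
        · rw [if_neg hac]
          have hw0 : 0 ≤ w' (n+1) a := (hw'props (n+1) (by omega)).1 a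
          have hih := ih a
          rw [hIcc]
          push_cast
          linarith
  -- upper bound on the deviation
  have hDle : ∀ t, 1 ≤ t → ∀ a : Fin K,
      (∑ s ∈ Finset.Icc 1 t, w' s a) - Ncount A a t ≤ K := by
    intro t ht a
    have h0 : ∑ b : Fin K, ((∑ s ∈ Finset.Icc 1 t, w' s b) - (Ncount A b t : ℝ)) = 0 := by
      rw [Finset.sum_sub_distrib, hW'sum t, hNr t]; ring
    have hsplit : ((∑ s ∈ Finset.Icc 1 t, w' s a) - (Ncount A a t : ℝ))
        + ∑ b ∈ Finset.univ.erase a, ((∑ s ∈ Finset.Icc 1 t, w' s b) - (Ncount A b t : ℝ))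
        = ∑ b : Fin K, ((∑ s ∈ Finset.Icc 1 t, w' s b) - (Ncount A b t : ℝ)) :=
      Finset.add_sum_erase Finset.univ
        (fun b => (∑ s ∈ Finset.Icc 1 t, w' s b) - (Ncount A b t : ℝ)) (Finset.mem_univ a)
    have hlb : ((K:ℝ) - 1) * (1/(K:ℝ) - 1) ≤ ∑ b ∈ Finset.univ.erase a,
        ((∑ s ∈ Finset.Icc 1 t, w' s b) - (Ncount A b t : ℝ)) := by
      have hcard : (Finset.univ.erase a).card = K - 1 := by
        rw [Finset.card_erase_of_mem (Finset.mem_univ a), Finset.card_univ, Fintype.card_fin]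
      have hns := Finset.card_nsmul_le_sum (Finset.univ.erase a)
        (fun b => (∑ s ∈ Finset.Icc 1 t, w' s b) - (Ncount A b t : ℝ))
        (1/(K:ℝ) - 1) (fun b _ => hD t ht b)
      rw [hcard, nsmul_eq_mul] at hns
      have hc : ((K - 1 : ℕ) : ℝ) = (K:ℝ) - 1 := by
        push_cast [hK]; ring
      rw [hc] at hns
      exact hns
    have hKinv : (K:ℝ) * (1/(K:ℝ)) = 1 := by field_simp
    have h1K' : 1/(K:ℝ) ≤ 1 := by rw [div_le_one hK0]; exact hKr
    nlinarith [hsplit, h0, hlb]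
  -- main statement
  intro t ht
  have hst1 : (1:ℝ) ≤ Real.sqrt t := Real.one_le_sqrt.mpr (by exact_mod_cast ht)
  have hst0 : (0:ℝ) ≤ Real.sqrt t := Real.sqrt_nonneg _
  constructor
  · intro a
    have hdiff : ∀ s ∈ Finset.Icc 1 t, |wt s a - w' s a| ≤ Real.sqrt 2 / 4 * (1 / Real.sqrt s) := by
      intro s hs
      simp only [Finset.mem_Icc] at hs
      rcases le_or_gt s K with h | h
      · rw [hwti s hs.1 h a, hw'i s hs.1 h a, sub_self, abs_zero]
        positivity
      · obtain ⟨u, rfl⟩ : ∃ u, s = u + 1 := ⟨s - 1, by omega⟩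
        have hu : K ≤ u := by omega
        have hu1 : (1:ℝ) ≤ (u:ℝ) := by exact_mod_cast hK.trans hu
        have hsu : (1:ℝ) ≤ Real.sqrt u := Real.one_le_sqrt.mpr hu1
        obtain ⟨hpos, hsum⟩ := hwt (u+1) (by omega)
        have hw1 : wt (u+1) a ≤ 1 := by
          have := Finset.single_le_sum (f := fun b => wt (u+1) b)
            (fun b _ => hpos b) (Finset.mem_univ a)
          rw [hsum] at this; exact this
        have hw0 : 0 ≤ wt (u+1) a := hpos a
        rw [hw'r u hu a]
        have hexp : wt (u+1) a - ((1 - 1/(4*Real.sqrt u)) * wt (u+1) a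
            + 1/(4*Real.sqrt u) * (1/(K:ℝ)))
            = 1/(4*Real.sqrt u) * (wt (u+1) a - 1/(K:ℝ)) := by ring
        rw [hexp, abs_mul, abs_of_pos (show (0:ℝ) < 1/(4*Real.sqrt u) by positivity)]
        have h1K' : 1/(K:ℝ) ≤ 1 := by rw [div_le_one hK0]; exact hKr
        have h2 : |wt (u+1) a - 1/(K:ℝ)| ≤ 1 := by
          rw [abs_le]
          constructor
          · linarith
          · linarith
        have hs2 : Real.sqrt ((u:ℝ)+1) ≤ Real.sqrt 2 * Real.sqrt u := by
          rw [← Real.sqrt_mul (by norm_num : (0:ℝ) ≤ 2) (u:ℝ)]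
          apply Real.sqrt_le_sqrt
          linarith
        have hkey : 1/(4*Real.sqrt u) ≤ Real.sqrt 2 / 4 * (1 / Real.sqrt ((u:ℝ)+1)) := by
          rw [mul_one_div, div_div, div_le_div_iff₀ (by positivity) (by positivity)]
          nlinarith [hs2]
        calc (1/(4*Real.sqrt u)) * |wt (u+1) a - 1/(K:ℝ)|
            ≤ (1/(4*Real.sqrt u)) * 1 :=
              mul_le_mul_of_nonneg_left h2 (by positivity)
          _ = 1/(4*Real.sqrt u) := by ring
          _ ≤ Real.sqrt 2 / 4 * (1 / Real.sqrt ((u:ℝ)+1)) := hkey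
          _ = Real.sqrt 2 / 4 * (1 / Real.sqrt ((u+1 : ℕ):ℝ)) := by push_cast; ring_nf
    have habs1 : |(∑ s ∈ Finset.Icc 1 t, wt s a) - ∑ s ∈ Finset.Icc 1 t, w' s a|
        ≤ Real.sqrt 2 / 4 * (2 * Real.sqrt t) := by
      rw [← Finset.sum_sub_distrib]
      calc |∑ s ∈ Finset.Icc 1 t, (wt s a - w' s a)|
          ≤ ∑ s ∈ Finset.Icc 1 t, |wt s a - w' s a| := Finset.abs_sum_le_sum_abs _ _
        _ ≤ ∑ s ∈ Finset.Icc 1 t, Real.sqrt 2 / 4 * (1 / Real.sqrt s) :=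
            Finset.sum_le_sum hdiff
        _ = Real.sqrt 2 / 4 * ∑ s ∈ Finset.Icc 1 t, 1 / Real.sqrt s := by
            rw [Finset.mul_sum]
        _ ≤ Real.sqrt 2 / 4 * (2 * Real.sqrt t) := by
            apply mul_le_mul_of_nonneg_left (sum_inv_sqrt_le t) (by positivity)
    have habs2 : |(∑ s ∈ Finset.Icc 1 t, w' s a) - (Ncount A a t : ℝ)| ≤ K := by
      rw [abs_le]
      constructor
      · have := hD t ht a; linarith
      · exact hDle t ht a
    have hs2le : Real.sqrt 2 ≤ 2 := by
      nlinarith [Real.sq_sqrt (by norm_num : (0:ℝ) ≤ 2), Real.sqrt_nonneg 2]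
    have htri := abs_sub_le (∑ s ∈ Finset.Icc 1 t, wt s a)
      (∑ s ∈ Finset.Icc 1 t, w' s a) ((Ncount A a t : ℝ))
    have hfin : Real.sqrt 2 / 4 * (2 * Real.sqrt t) + K ≤ 2 * K * Real.sqrt t := by
      nlinarith [mul_nonneg (sub_nonneg.2 hKr) (sub_nonneg.2 hst1),
        mul_nonneg (sub_nonneg.2 hs2le) hst0]
    linarith
  · intro a
    have hN0 : (0:ℝ) ≤ (Ncount A a t : ℝ) := Nat.cast_nonneg _
    rcases le_or_gt t K with hc | hc
    · have htK : (t:ℝ) ≤ K := by exact_mod_cast hc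
      have h1 : Real.sqrt t ≤ (K:ℝ) := by
        calc Real.sqrt t ≤ Real.sqrt K := Real.sqrt_le_sqrt htK
          _ ≤ (K:ℝ) := by
            rw [Real.sqrt_le_left (le_of_lt hK0)]
            nlinarith
      have h2 : Real.sqrt t / (4*(K:ℝ)) ≤ 1 := by
        rw [div_le_one (by positivity)]
        nlinarith
      nlinarith
    · have hNW := hDle t ht a
      have hIoc : Finset.Icc 1 t = Finset.Ioc 0 t := by ext x; simp; omega
      have hsplit : ∑ s ∈ Finset.Icc 1 t, w' s a
          = (∑ s ∈ Finset.Ioc 0 K, w' s a) + ∑ s ∈ Finset.Ioc K t, w' s a := by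
        rw [hIoc, ← Finset.sum_Ioc_consecutive _ (Nat.zero_le K) (le_of_lt hc)]
      have hfirst : ∑ s ∈ Finset.Ioc 0 K, w' s a = 1 := by
        have hcg : ∀ s ∈ Finset.Ioc 0 K, w' s a = 1/(K:ℝ) := by
          intro s hs; simp only [Finset.mem_Ioc] at hs; exact hw'i s hs.1 hs.2 a
        rw [Finset.sum_congr rfl hcg, Finset.sum_const, Nat.card_Ioc, Nat.sub_zero, nsmul_eq_mul]
        field_simp
      have hpt : ∀ s ∈ Finset.Ioc K t, 1/(4*(K:ℝ)) * (1 / Real.sqrt s) ≤ w' s a := by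
        intro s hs
        simp only [Finset.mem_Ioc] at hs
        obtain ⟨u, rfl⟩ : ∃ u, s = u + 1 := ⟨s - 1, by omega⟩
        have hu : K ≤ u := by omega
        have hu1 : (1:ℝ) ≤ (u:ℝ) := by exact_mod_cast hK.trans hu
        have hsu : (1:ℝ) ≤ Real.sqrt u := Real.one_le_sqrt.mpr hu1
        have hsu1 : Real.sqrt u ≤ Real.sqrt ((u:ℝ)+1) := Real.sqrt_le_sqrt (by linarith)
        obtain ⟨hpos, _⟩ := hwt (u+1) (by omega)
        rw [hw'r u hu a]
        have hlow : 1/(4*Real.sqrt u) * (1/(K:ℝ))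
            ≤ (1 - 1/(4*Real.sqrt u)) * wt (u+1) a + 1/(4*Real.sqrt u) * (1/(K:ℝ)) := by
          have hγ1 : 1/(4 * Real.sqrt u) ≤ 1/4 := by
            apply one_div_le_one_div_of_le (by norm_num); linarith
          nlinarith [mul_nonneg (show (0:ℝ) ≤ 1 - 1/(4*Real.sqrt u) by linarith) (hpos a)]
        have hcmp : 1/(4*(K:ℝ)) * (1 / Real.sqrt ((u+1:ℕ):ℝ)) ≤ 1/(4*Real.sqrt u) * (1/(K:ℝ)) := by
          have hcc : ((u+1:ℕ):ℝ) = (u:ℝ)+1 := by push_cast; ring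
          rw [hcc]
          rw [mul_one_div, mul_one_div, div_div, div_div,
            div_le_div_iff₀ (by positivity) (by positivity)]
          nlinarith [hsu1, hK0]
        linarith
      have hsecond : 1/(4*(K:ℝ)) * (2 * (Real.sqrt ((t:ℝ)+1) - Real.sqrt ((K:ℝ)+1)))
          ≤ ∑ s ∈ Finset.Ioc K t, w' s a := by
        calc 1/(4*(K:ℝ)) * (2 * (Real.sqrt ((t:ℝ)+1) - Real.sqrt ((K:ℝ)+1)))
            ≤ 1/(4*(K:ℝ)) * ∑ s ∈ Finset.Ioc K t, 1 / Real.sqrt s :=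
              mul_le_mul_of_nonneg_left (sum_inv_sqrt_ge K t) (by positivity)
          _ = ∑ s ∈ Finset.Ioc K t, 1/(4*(K:ℝ)) * (1 / Real.sqrt s) := by
              rw [Finset.mul_sum]
          _ ≤ ∑ s ∈ Finset.Ioc K t, w' s a := Finset.sum_le_sum hpt
      -- final arithmetic
      have hsK1 : Real.sqrt ((K:ℝ)+1) ≤ (K:ℝ)+1 := by
        rw [Real.sqrt_le_left (by positivity)]
        nlinarith
      have hstt : Real.sqrt t ≤ Real.sqrt ((t:ℝ)+1) := Real.sqrt_le_sqrt (by linarith)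
      have hstt0 : (0:ℝ) ≤ Real.sqrt ((t:ℝ)+1) := Real.sqrt_nonneg _
      have hN : 1 + 1/(4*(K:ℝ)) * (2 * (Real.sqrt ((t:ℝ)+1) - Real.sqrt ((K:ℝ)+1))) - K
          ≤ (Ncount A a t : ℝ) := by
        have := hsplit
        linarith [hNW, hsecond, hfirst]
      have h4K0 : (0:ℝ) < 4*(K:ℝ) := by positivity
      rw [sub_le_iff_le_add, div_le_iff₀ h4K0]
      have hmul := mul_le_mul_of_nonneg_left hN (le_of_lt h4K0)
      have hclear : (4*(K:ℝ)) * (1 + 1/(4*(K:ℝ)) * (2 * (Real.sqrt ((t:ℝ)+1) - Real.sqrt ((K:ℝ)+1))) - K)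
          = 4*(K:ℝ) + 2*(Real.sqrt ((t:ℝ)+1) - Real.sqrt ((K:ℝ)+1)) - 4*(K:ℝ)^2 := by
        field_simp
      rw [hclear] at hmul
      nlinarith [hmul, hsK1, hstt, hKr, hst0, hstt0]
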